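/- Let W : ℝ² → ℝ be a polynomial function, let ρ ∈ {1, 3}, and let f : ℝ → ℝ² be a differentiable function satisfying f′(t) = (P_W(f(t)), Q_W(f(t))) for all t ∈ ℝ. If ‖f(0)‖ = ρ (Euclidean norm), then ‖f(t)‖ = ρ for all t ∈ ℝ; that is, the circles of radius 1 and radius 3 centered at the origin are invariant under the flow of the R4-class system. -/

import Mathlib

open Set

/-- A scalar linear ODE `g' = c t * g` with continuous coefficient and zero initial
condition has only the zero solution, forward in time. -/
lemma linODE_zero_forward (g c : ℝ → ℝ) (hg : ∀ t, HasDerivAt g (c t * g t) t)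
    (hc : Continuous c) (h0 : g 0 = 0) : ∀ t ≥ 0, g t = 0 := by
  intro t ht
  obtain ⟨C, hC⟩ := (isCompact_Icc (a := (0:ℝ)) (b := t)).exists_bound_of_continuousOn
    hc.continuousOn
  have hgt : ∀ x ∈ Icc (0:ℝ) t, ‖g x‖ ≤ gronwallBound 0 C 0 (x - 0) := by
    refine norm_le_gronwallBound_of_norm_deriv_right_le
      (fun x _ => (hg x).continuousAt.continuousWithinAt)
      (fun x _ => (hg x).hasDerivWithinAt) (by simp [h0]) ?_
    intro x hx
    have h1 : ‖c x * g x‖ = ‖c x‖ * ‖g x‖ := norm_mul _ _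
    have h2 : ‖c x‖ ≤ C := hC x (Ico_subset_Icc_self hx)
    calc ‖c x * g x‖ = ‖c x‖ * ‖g x‖ := h1
      _ ≤ C * ‖g x‖ := by
          exact mul_le_mul_of_nonneg_right h2 (norm_nonneg _)
      _ = C * ‖g x‖ + 0 := by ring
  have h1 := hgt t ⟨ht, le_refl t⟩
  rw [gronwallBound_ε0_δ0] at h1
  have h2 : ‖g t‖ = 0 := le_antisymm h1 (norm_nonneg _)
  simpa using h2

/-- A scalar linear ODE `g' = c t * g` with continuous coefficient and zero initial
condition has only the zero solution. -/
lemma linODE_zero (g c : ℝ → ℝ) (hg : ∀ t, HasDerivAt g (c t * g t) t)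
    (hc : Continuous c) (h0 : g 0 = 0) : ∀ t, g t = 0 := by
  intro t
  rcases le_or_gt 0 t with ht | ht
  · exact linODE_zero_forward g c hg hc h0 t ht
  · have hg' : ∀ s, HasDerivAt (fun s => g (-s)) ((-c (-s)) * g (-s)) s := by
      intro s
      have := (hg (-s)).comp s (hasDerivAt_neg s)
      refine this.congr_deriv ?_
      ring
    have := linODE_zero_forward (fun s => g (-s)) (fun s => -c (-s)) hg'
      (by continuity) (by simpa using h0) (-t) (by linarith)
    simpa using this

/-- For any polynomial `W`, the circles of radius 1 and 3 centered at the origin are invariant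
under the flow of the R4-class system: a solution starting on such a circle stays on it. -/
theorem stmt12 (W : MvPolynomial (Fin 2) ℝ)
    (P Q : ℝ → ℝ → ℝ)
    (hP : ∀ x y : ℝ, P x y = x * (x^2 + y^2 - 1) * (x^2 + y^2 - 9)
      - y * (x^2 + y^2 - 2*x - 8) * MvPolynomial.eval ![x, y] W)
    (hQ : ∀ x y : ℝ, Q x y = y * (x^2 + y^2 - 1) * (x^2 + y^2 - 9)
      + x * (x^2 + y^2 - 2*x - 8) * MvPolynomial.eval ![x, y] W)
    (ρ : ℝ) (hρ : ρ = 1 ∨ ρ = 3)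
    (f : ℝ → ℝ × ℝ)
    (hf : ∀ t : ℝ, HasDerivAt f (P (f t).1 (f t).2, Q (f t).1 (f t).2) t)
    (h0 : Real.sqrt ((f 0).1 ^ 2 + (f 0).2 ^ 2) = ρ) :
    ∀ t : ℝ, Real.sqrt ((f t).1 ^ 2 + (f t).2 ^ 2) = ρ := by
  -- coordinates and their derivatives
  have hx : ∀ t, HasDerivAt (fun t => (f t).1) (P (f t).1 (f t).2) t := by
    intro t
    exact (hasFDerivAt_fst.comp_hasDerivAt t (hf t) :)
  have hy : ∀ t, HasDerivAt (fun t => (f t).2) (Q (f t).1 (f t).2) t := by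
    intro t
    exact (hasFDerivAt_snd.comp_hasDerivAt t (hf t) :)
  have hfc : Continuous f := by
    rw [continuous_iff_continuousAt]; exact fun t => (hf t).continuousAt
  -- g = r² - ρ²
  set g : ℝ → ℝ := fun t => (f t).1 ^ 2 + (f t).2 ^ 2 - ρ ^ 2 with hgdef
  have hg0 : g 0 = 0 := by
    have hnn : (0:ℝ) ≤ (f 0).1 ^ 2 + (f 0).2 ^ 2 := by positivity
    have := Real.sq_sqrt hnn
    rw [h0] at this
    simp [hgdef, ← this]
  -- derivative of g
  have hgderiv : ∀ t, HasDerivAt g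
      (2 * ((f t).1 ^ 2 + (f t).2 ^ 2) * ((f t).1 ^ 2 + (f t).2 ^ 2 - 1)
        * ((f t).1 ^ 2 + (f t).2 ^ 2 - 9)) t := by
    intro t
    have h1 : HasDerivAt (fun t => (f t).1 ^ 2 + (f t).2 ^ 2 - ρ ^ 2)
        (2 * (f t).1 * P (f t).1 (f t).2 + 2 * (f t).2 * Q (f t).1 (f t).2) t := by
      have := (((hx t).pow 2).add ((hy t).pow 2)).sub_const (ρ ^ 2)
      refine this.congr_deriv ?_
      push_cast
      ring
    convert h1 using 1
    rw [hP, hQ]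
    ring
  -- choose the continuous coefficient c depending on ρ
  obtain ⟨c, hc, hcg⟩ : ∃ c : ℝ → ℝ, Continuous c ∧ ∀ t, c t * g t =
      2 * ((f t).1 ^ 2 + (f t).2 ^ 2) * ((f t).1 ^ 2 + (f t).2 ^ 2 - 1)
        * ((f t).1 ^ 2 + (f t).2 ^ 2 - 9) := by
    rcases hρ with h | h
    · refine ⟨fun t => 2 * ((f t).1 ^ 2 + (f t).2 ^ 2) * ((f t).1 ^ 2 + (f t).2 ^ 2 - 9),
        by fun_prop, fun t => ?_⟩
      simp only [hgdef, h]
      ring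
    · refine ⟨fun t => 2 * ((f t).1 ^ 2 + (f t).2 ^ 2) * ((f t).1 ^ 2 + (f t).2 ^ 2 - 1),
        by fun_prop, fun t => ?_⟩
      simp only [hgdef, h]
      ring
  have hglin : ∀ t, HasDerivAt g (c t * g t) t := by
    intro t; rw [hcg t]; exact hgderiv t
  have hzero : ∀ t, g t = 0 := linODE_zero g c hglin hc hg0
  intro t
  have hsum : (f t).1 ^ 2 + (f t).2 ^ 2 = ρ ^ 2 := by
    have := hzero t; simp only [hgdef] at this; linarith
  rw [hsum, Real.sqrt_sq (by rcases hρ with h | h <;> rw [h] <;> norm_num)]
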